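/- There exists, for every n divisible by 8, a finite multiset of vectors in {−1,+1}^n with the all-ones signing such that (a) the signing is a local optimum of the ℓ₂-potential local search (for every vector a in the multiset, ⟨S, a⟩ ≤ n where S is the signed sum), and (b) the discrepancy ‖S‖_∞ is at least c·2^{n/2} for an absolute constant c > 0, while (c) the optimal offline discrepancy of the multiset is 0. -/
import Mathlib


open Finset


/-- Jacobsthal-like weights: `3 * aseq k = 2^(k+1) + (-1)^k`. -/
def aseq : ℕ → ℤ
  | 0 => 1
  | (k+1) => 2 * aseq k + (-1)^(k+1)

lemma neg_one_pow_cases (k : ℕ) : ((-1:ℤ))^k = 1 ∨ ((-1:ℤ))^k = -1 := by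
  rcases Nat.even_or_odd k with h | h
  · left; exact Even.neg_one_pow h
  · right; exact Odd.neg_one_pow h

lemma aseq_formula (k : ℕ) : 3 * aseq k = 2^(k+1) + (-1)^k := by
  induction k with
  | zero => simp [aseq]
  | succ k ih =>
    rw [aseq]
    have : ((-1:ℤ))^(k+1) = -((-1)^k) := by ring
    rw [this]
    ring_nf
    ring_nf at ih
    omega

lemma aseq_pos (k : ℕ) : 1 ≤ aseq k := by
  have h := aseq_formula k
  have h2 : (2:ℤ)^(k+1) ≥ 2 := by
    calc (2:ℤ)^(k+1) ≥ 2^1 := pow_le_pow_right₀ (by norm_num) (by omega)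
    _ = 2 := by norm_num
  rcases neg_one_pow_cases k with hp | hp <;> omega

lemma aseq_odd (k : ℕ) : Odd (aseq k) := by
  induction k with
  | zero => simp [aseq]
  | succ k ih =>
    rcases ih with ⟨m, hm⟩
    rcases neg_one_pow_cases (k+1) with h | h
    · exact ⟨2*m+1, by rw [aseq, h]; omega⟩
    · exact ⟨2*m, by rw [aseq, h]; omega⟩


/-! ### The vector families -/

/-- target column sums: `sig k = (a_k, a_k, a_{k-1}, a_{k-1}, ..., a_0, a_0)` on `2k+2` coords -/
def sig (k j : ℕ) : ℤ := aseq (k - j / 2)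

/-- prepend two coordinates -/
def cons2 (p q : ℤ) (t : ℕ → ℤ) : ℕ → ℤ :=
  fun j => if j = 0 then p else if j = 1 then q else t (j-2)

def topRow : ℕ → ℤ := fun j => if j < 2 then 1 else -1

/-- family with all column sums `1`, inner products with `sig` at most `2` -/
def Zl : ℕ → List (ℕ → ℤ)
  | 0 => [fun _ => 1]
  | (k+1) => topRow :: ((Zl k).map (cons2 1 (-1)) ++ (Zl k).map (cons2 (-1) 1))

/-- family with column sums `sig k`, inner products with `sig` at most `2` -/
def Bl : ℕ → List (ℕ → ℤ)
  | 0 => [fun _ => 1]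
  | (k+1) =>
      List.replicate (aseq (k+1)).toNat topRow ++
        (((Bl k ++ (List.replicate (aseq (k+1)).toNat (Zl k)).flatten).take
            ((Bl k ++ (List.replicate (aseq (k+1)).toNat (Zl k)).flatten).length / 2)).map (cons2 1 (-1)) ++
         ((Bl k ++ (List.replicate (aseq (k+1)).toNat (Zl k)).flatten).drop
            ((Bl k ++ (List.replicate (aseq (k+1)).toNat (Zl k)).flatten).length / 2)).map (cons2 (-1) 1))

/-- the middle pool at level `k+1` -/
def El (k : ℕ) : List (ℕ → ℤ) :=
  Bl k ++ (List.replicate (aseq (k+1)).toNat (Zl k)).flatten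

lemma Bl_succ (k : ℕ) : Bl (k+1) =
    List.replicate (aseq (k+1)).toNat topRow ++
      (((El k).take ((El k).length / 2)).map (cons2 1 (-1)) ++
       ((El k).drop ((El k).length / 2)).map (cons2 (-1) 1)) := rfl

/-- column sums of a list of vectors -/
def colsum (l : List (ℕ → ℤ)) (j : ℕ) : ℤ := (l.map (fun v => v j)).sum

/-- inner product with the target `sig k` -/
def ipr (k : ℕ) (v : ℕ → ℤ) : ℤ := ∑ j ∈ range (2*k+2), sig k j * v j

def Vs (k : ℕ) : ℤ := ∑ j ∈ range (2*k+2), sig k j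

/-! ### index gymnastics for `sig` -/

lemma sig_zero (k : ℕ) : sig k 0 = aseq k := by simp [sig]
lemma sig_one (k : ℕ) : sig k 1 = aseq k := by simp [sig]
lemma sig_shift (k j : ℕ) : sig (k+1) (j+2) = sig k j := by
  unfold sig
  congr 1
  omega

lemma peel2 (f : ℕ → ℤ) (n : ℕ) :
    ∑ j ∈ range (n+2), f j = f 0 + f 1 + ∑ j ∈ range n, f (j+2) := by
  rw [sum_range_succ' f (n+1), sum_range_succ' (fun x => f (x+1)) n]
  ring

lemma cons2_two (p q : ℤ) (t : ℕ → ℤ) (j : ℕ) : cons2 p q t (j+2) = t j := by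
  simp [cons2]

lemma cons2_zero (p q : ℤ) (t : ℕ → ℤ) : cons2 p q t 0 = p := rfl
lemma cons2_one (p q : ℤ) (t : ℕ → ℤ) : cons2 p q t 1 = q := rfl

lemma ipr_cons2 (k : ℕ) (p q : ℤ) (t : ℕ → ℤ) :
    ipr (k+1) (cons2 p q t) = aseq (k+1) * (p + q) + ipr k t := by
  unfold ipr
  have h : 2*(k+1)+2 = (2*k+2)+2 := by ring
  rw [h, peel2]
  simp only [cons2_zero, cons2_one, cons2_two, sig_shift, sig_zero, sig_one]
  ring

lemma ipr_topRow (k : ℕ) : ipr (k+1) topRow = 2 * aseq (k+1) - Vs k := by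
  unfold ipr Vs
  have h : 2*(k+1)+2 = (2*k+2)+2 := by ring
  rw [h, peel2]
  have h0 : topRow 0 = 1 := rfl
  have h1 : topRow 1 = 1 := rfl
  have h2 : ∀ j : ℕ, topRow (j+2) = -1 := fun j => by simp [topRow]
  simp only [h0, h1, h2, sig_shift, sig_zero, sig_one, mul_one, mul_neg]
  rw [Finset.sum_neg_distrib]
  ring

lemma Vs_succ (k : ℕ) : Vs (k+1) = 2 * aseq (k+1) + Vs k := by
  unfold Vs
  have h : 2*(k+1)+2 = (2*k+2)+2 := by ring
  rw [h, peel2]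
  simp only [sig_shift, sig_zero, sig_one]
  ring

lemma Vs_zero : Vs 0 = 2 := by
  unfold Vs
  simp [sig, aseq]

/-- key balance identity -/
lemma key_identity (k : ℕ) : 2 * aseq (k+1) = Vs k + 1 + (-1)^(k+1) := by
  induction k with
  | zero => rw [Vs_zero]; simp [aseq]
  | succ k ih =>
    rw [Vs_succ, show (k+1+1) = (k+1)+1 from rfl, aseq]
    have : ((-1:ℤ))^(k+1+1) = -((-1)^(k+1)) := by ring
    rw [this] at *
    omega


/-! ### column sum machinery -/

lemma colsum_append (l₁ l₂ : List (ℕ → ℤ)) (j : ℕ) :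
    colsum (l₁ ++ l₂) j = colsum l₁ j + colsum l₂ j := by
  simp [colsum]

lemma colsum_cons (v : ℕ → ℤ) (l : List (ℕ → ℤ)) (j : ℕ) :
    colsum (v :: l) j = v j + colsum l j := by
  simp [colsum]

lemma sum_map_const (l : List (ℕ → ℤ)) (c : ℤ) :
    (l.map (fun _ => c)).sum = l.length * c := by
  induction l with
  | nil => simp
  | cons a t ih => simp [ih]; ring

lemma colsum_map_cons2_zero (l : List (ℕ → ℤ)) (p q : ℤ) :
    colsum (l.map (cons2 p q)) 0 = l.length * p := by
  unfold colsum
  rw [List.map_map]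
  have : ((fun v => v 0) ∘ cons2 p q) = (fun _ => p) := by
    funext v; rfl
  rw [this, sum_map_const]

lemma colsum_map_cons2_one (l : List (ℕ → ℤ)) (p q : ℤ) :
    colsum (l.map (cons2 p q)) 1 = l.length * q := by
  unfold colsum
  rw [List.map_map]
  have : ((fun v => v 1) ∘ cons2 p q) = (fun _ => q) := by
    funext v; rfl
  rw [this, sum_map_const]

lemma colsum_map_cons2_two (l : List (ℕ → ℤ)) (p q : ℤ) (j : ℕ) :
    colsum (l.map (cons2 p q)) (j+2) = colsum l j := by
  unfold colsum
  rw [List.map_map]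
  have : ((fun v => v (j+2)) ∘ cons2 p q) = (fun v : ℕ → ℤ => v j) := by
    funext v; exact cons2_two p q v j
  rw [this]

lemma colsum_replicate (a : ℕ) (v : ℕ → ℤ) (j : ℕ) :
    colsum (List.replicate a v) j = a * v j := by
  unfold colsum
  rw [List.map_replicate, List.sum_replicate, nsmul_eq_mul]

lemma colsum_flatten_replicate (a : ℕ) (l : List (ℕ → ℤ)) (j : ℕ) :
    colsum (List.replicate a l).flatten j = a * colsum l j := by
  induction a with
  | zero => simp [colsum]
  | succ a ih =>
    rw [List.replicate_succ, List.flatten_cons, colsum_append, ih]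
    push_cast
    ring

lemma length_flatten_replicate (a : ℕ) (l : List (ℕ → ℤ)) :
    (List.replicate a l).flatten.length = a * l.length := by
  induction a with
  | zero => simp
  | succ a ih => rw [List.replicate_succ, List.flatten_cons, List.length_append, ih]; ring


/-! ### invariants of `Zl` and `Bl` -/

lemma topRow_entries (j : ℕ) : topRow j = 1 ∨ topRow j = -1 := by
  unfold topRow; split <;> simp

lemma cons2_entries {p q : ℤ} {t : ℕ → ℤ} (hp : p = 1 ∨ p = -1) (hq : q = 1 ∨ q = -1)
    (ht : ∀ j, t j = 1 ∨ t j = -1) (j : ℕ) : cons2 p q t j = 1 ∨ cons2 p q t j = -1 := by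
  match j with
  | 0 => exact hp
  | 1 => exact hq
  | (x+2) => rw [cons2_two]; exact ht x

lemma aseq_toNat (k : ℕ) : ((aseq k).toNat : ℤ) = aseq k :=
  Int.toNat_of_nonneg (le_trans (by norm_num) (aseq_pos k))

lemma aseq_toNat_odd (k : ℕ) : Odd ((aseq k).toNat) := by
  have h := aseq_odd k
  rw [← aseq_toNat k] at h
  exact Int.odd_coe_nat _ |>.mp h

lemma neg_one_pow_le_one (k : ℕ) : ((-1:ℤ))^k ≤ 1 := by
  rcases neg_one_pow_cases k with h | h <;> omega

/-- membership in the pool `El k` -/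
lemma mem_El {k : ℕ} {v : ℕ → ℤ} (h : v ∈ El k) : v ∈ Bl k ∨ v ∈ Zl k := by
  unfold El at h
  rcases List.mem_append.mp h with h | h
  · exact Or.inl h
  · right
    rcases List.mem_flatten.mp h with ⟨l, hl, hv⟩
    rwa [List.eq_of_mem_replicate hl] at hv

lemma Zl_entries (k : ℕ) : ∀ v ∈ Zl k, ∀ j, v j = 1 ∨ v j = -1 := by
  induction k with
  | zero => intro v hv j; simp [Zl] at hv; simp [hv]
  | succ k ih =>
    intro v hv j
    rw [Zl] at hv
    rcases List.mem_cons.mp hv with h | h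
    · rw [h]; exact topRow_entries j
    · rcases List.mem_append.mp h with h | h <;>
      · rcases List.mem_map.mp h with ⟨t, ht, rfl⟩
        exact cons2_entries (by norm_num) (by norm_num) (ih t ht) j

lemma Zl_length_odd (k : ℕ) : Odd (Zl k).length := by
  induction k with
  | zero => simp [Zl]
  | succ k ih =>
    rw [Zl]
    simp only [List.length_cons, List.length_append, List.length_map]
    rcases ih with ⟨m, hm⟩
    exact ⟨2*m+1, by omega⟩

lemma Zl_colsum (k : ℕ) : ∀ j < 2*k+2, colsum (Zl k) j = 1 := by
  induction k with
  | zero =>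
    intro j hj
    simp [Zl, colsum]
  | succ k ih =>
    intro j hj
    rw [Zl, colsum_cons, colsum_append]
    match j, hj with
    | 0, _ =>
      rw [colsum_map_cons2_zero, colsum_map_cons2_zero]
      simp [topRow]
    | 1, _ =>
      rw [colsum_map_cons2_one, colsum_map_cons2_one]
      simp [topRow]
    | (x+2), hj =>
      rw [colsum_map_cons2_two, colsum_map_cons2_two, ih x (by omega)]
      simp [topRow]

lemma Zl_ipr (k : ℕ) : ∀ v ∈ Zl k, ipr k v ≤ 2 := by
  induction k with
  | zero =>
    intro v hv
    simp [Zl] at hv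
    subst hv
    unfold ipr
    simp [sig, aseq]
  | succ k ih =>
    intro v hv
    rw [Zl] at hv
    rcases List.mem_cons.mp hv with h | h
    · rw [h, ipr_topRow, key_identity k]
      have := neg_one_pow_le_one (k+1)
      omega
    · rcases List.mem_append.mp h with h | h <;>
      · rcases List.mem_map.mp h with ⟨t, ht, rfl⟩
        rw [ipr_cons2]
        have := ih t ht
        omega


lemma El_length (k : ℕ) :
    (El k).length = (Bl k).length + (aseq (k+1)).toNat * (Zl k).length := by
  unfold El
  rw [List.length_append, length_flatten_replicate]

lemma El_length_even (k : ℕ) (h : Odd (Bl k).length) : Even (El k).length := by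
  rw [El_length]
  rcases h with ⟨m, hm⟩
  rcases aseq_toNat_odd (k+1) with ⟨a, ha⟩
  rcases Zl_length_odd k with ⟨z, hz⟩
  exact ⟨m + (a*(2*z+1) + z + 1), by rw [hm, ha, hz]; ring⟩

lemma Bl_length_odd (k : ℕ) : Odd (Bl k).length := by
  induction k with
  | zero => simp [Bl]
  | succ k ih =>
    rw [Bl_succ]
    have hE := El_length_even k ih
    simp only [List.length_append, List.length_map, List.length_replicate,
      List.length_take, List.length_drop]
    rw [Nat.odd_iff] at *
    rw [Nat.even_iff] at hE
    rcases aseq_toNat_odd (k+1) with ⟨a, ha⟩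
    omega


lemma Bl_entries (k : ℕ) : ∀ v ∈ Bl k, ∀ j, v j = 1 ∨ v j = -1 := by
  induction k with
  | zero => intro v hv j; simp [Bl] at hv; simp [hv]
  | succ k ih =>
    intro v hv j
    rw [Bl_succ] at hv
    rcases List.mem_append.mp hv with h | h
    · rw [List.eq_of_mem_replicate h]; exact topRow_entries j
    · have hent : ∀ t ∈ El k, ∀ j, t j = 1 ∨ t j = -1 := by
        intro t ht
        rcases mem_El ht with h' | h'
        · exact ih t h'
        · exact Zl_entries k t h'
      rcases List.mem_append.mp h with h | h <;>
        rcases List.mem_map.mp h with ⟨t, ht, rfl⟩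
      · exact cons2_entries (by norm_num) (by norm_num)
          (hent t (List.take_subset _ _ ht)) j
      · exact cons2_entries (by norm_num) (by norm_num)
          (hent t (List.drop_subset _ _ ht)) j

lemma Bl_ipr (k : ℕ) : ∀ v ∈ Bl k, ipr k v ≤ 2 := by
  induction k with
  | zero =>
    intro v hv
    simp [Bl] at hv
    subst hv
    unfold ipr
    simp [sig, aseq]
  | succ k ih =>
    intro v hv
    rw [Bl_succ] at hv
    rcases List.mem_append.mp hv with h | h
    · rw [List.eq_of_mem_replicate h, ipr_topRow, key_identity k]
      have := neg_one_pow_le_one (k+1)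
      omega
    · have hval : ∀ t ∈ El k, ipr k t ≤ 2 := by
        intro t ht
        rcases mem_El ht with h' | h'
        · exact ih t h'
        · exact Zl_ipr k t h'
      rcases List.mem_append.mp h with h | h <;>
        rcases List.mem_map.mp h with ⟨t, ht, rfl⟩ <;>
        rw [ipr_cons2]
      · have := hval t (List.take_subset _ _ ht); omega
      · have := hval t (List.drop_subset _ _ ht); omega

lemma Bl_colsum (k : ℕ) : ∀ j < 2*k+2, colsum (Bl k) j = sig k j := by
  induction k with
  | zero =>
    intro j hj
    interval_cases j <;> simp [Bl, colsum, sig, aseq]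
  | succ k ih =>
    intro j hj
    have hEe := El_length_even k (Bl_length_odd k)
    set h2 : ℕ := (El k).length / 2 with hh2
    have hlen2 : (El k).length = h2 + h2 := by
      rcases hEe with ⟨m, hm⟩
      omega
    have htake : ((El k).take h2).length = h2 := by
      rw [List.length_take]
      omega
    have hdrop : ((El k).drop h2).length = h2 := by
      rw [List.length_drop]
      omega
    have hsplit : ∀ x : ℕ, colsum ((El k).take h2) x + colsum ((El k).drop h2) x
        = colsum (El k) x := by
      intro x
      rw [← colsum_append, List.take_append_drop]
    have hEcol : ∀ x < 2*k+2, colsum (El k) x = sig k x + (aseq (k+1)).toNat * 1 := by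
      intro x hx
      unfold El
      rw [colsum_append, colsum_flatten_replicate, ih x hx, Zl_colsum k x hx]
    rw [Bl_succ, colsum_append, colsum_append, colsum_replicate]
    match j, hj with
    | 0, _ =>
      rw [colsum_map_cons2_zero, colsum_map_cons2_zero, htake, hdrop, sig_zero]
      simp only [topRow]
      rw [← aseq_toNat (k+1)]
      push_cast
      ring_nf
      simp
    | 1, _ =>
      rw [colsum_map_cons2_one, colsum_map_cons2_one, htake, hdrop, sig_one]
      simp only [topRow]
      rw [← aseq_toNat (k+1)]
      push_cast
      ring_nf
      simp
    | (x+2), hj =>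
      rw [colsum_map_cons2_two, colsum_map_cons2_two, hsplit x,
        hEcol x (by omega), sig_shift]
      have : topRow (x+2) = -1 := by simp [topRow]
      rw [this]
      ring


/-! ### final assembly -/

lemma sum_getD (l : List (ℕ → ℤ)) (d : ℕ → ℤ) (j : ℕ) :
    ∑ i ∈ range l.length, (l.getD i d) j = colsum l j := by
  induction l with
  | nil => simp [colsum]
  | cons v t ih =>
    rw [List.length_cons, sum_range_succ']
    simp only [List.getD_cons_succ, List.getD_cons_zero]
    rw [ih, colsum_cons]
    ring

lemma pow_bound (k : ℕ) (hk : 1 ≤ k) : (2:ℤ)^(k+1) ≤ 4 * aseq k := by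
  have h := aseq_formula k
  have h4 : (4:ℤ) ≤ 2^(k+1) := by
    calc (4:ℤ) = 2^2 := by norm_num
    _ ≤ 2^(k+1) := pow_le_pow_right₀ (by norm_num) (by omega)
  rcases neg_one_pow_cases k with hp | hp <;> omega

theorem stmt5' :
    ∃ c : ℝ, 0 < c ∧
      ∀ n : ℕ, 0 < n → 8 ∣ n →
        ∃ (T : ℕ) (a : Fin T → Fin n → ℤ),
          (∀ i j, a i j = 1 ∨ a i j = -1) ∧
          (∀ i : Fin T, (∑ j : Fin n, (∑ i' : Fin T, a i' j) * a i j) ≤ (n : ℤ)) ∧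
          (∃ j : Fin n, c * 2 ^ (n / 2) ≤ |((∑ i' : Fin T, a i' j : ℤ) : ℝ)|) ∧
          (∃ ε : Fin T → ℤ, (∀ i, ε i = 1 ∨ ε i = -1) ∧
            ∀ j : Fin n, ∑ i : Fin T, ε i * a i j = 0) := by
  refine ⟨1/2, by norm_num, ?_⟩
  intro n hn h8
  obtain ⟨t, rfl⟩ := h8
  have ht : 1 ≤ t := by omega
  set k : ℕ := 4*t - 1 with hk
  have hkn : 8*t = 2*k+2 := by omega
  set R : ℕ := (Bl k).length with hRdef
  have hR : 0 < R := by
    rcases Bl_length_odd k with ⟨m, hm⟩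
    omega
  set d : ℕ → ℤ := fun _ => 1 with hd
  have hS : ∀ jv : ℕ, jv < 2*k+2 →
      ∑ i ∈ range (2*R), (Bl k).getD (i % R) d jv = 2 * sig k jv := by
    intro jv hjv
    rw [two_mul, Finset.sum_range_add]
    have h1 : ∑ i ∈ range R, (Bl k).getD (i % R) d jv
        = ∑ i ∈ range R, (Bl k).getD i d jv := by
      apply Finset.sum_congr rfl
      intro i hi
      rw [Nat.mod_eq_of_lt (mem_range.mp hi)]
    have h2 : ∑ i ∈ range R, (Bl k).getD ((R + i) % R) d jv
        = ∑ i ∈ range R, (Bl k).getD i d jv := by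
      apply Finset.sum_congr rfl
      intro i hi
      rw [Nat.add_mod_left, Nat.mod_eq_of_lt (mem_range.mp hi)]
    rw [h1, h2, hRdef, sum_getD, Bl_colsum k jv hjv]
    ring
  refine ⟨2*R, fun i j => (Bl k).getD (i.val % R) d j.val, ?_, ?_, ?_, ?_⟩
  case refine_2 =>
    intro i
    have hmem : (Bl k).getD (i.val % R) d ∈ Bl k := by
      rw [List.getD_eq_getElem _ _ (Nat.mod_lt _ hR)]
      exact List.getElem_mem _
    have hiv := Bl_ipr k _ hmem
    have e1 : ∑ j : Fin (8*t), (∑ i' : Fin (2*R), (Bl k).getD (i'.val % R) d j.val)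
          * (Bl k).getD (i.val % R) d j.val
        = ∑ jv ∈ range (8*t), (∑ i' ∈ range (2*R), (Bl k).getD (i' % R) d jv)
          * (Bl k).getD (i.val % R) d jv := by
      rw [← Fin.sum_univ_eq_sum_range (fun jv =>
        (∑ i' ∈ range (2*R), (Bl k).getD (i' % R) d jv) * (Bl k).getD (i.val % R) d jv) (8*t)]
      apply Finset.sum_congr rfl
      intro j _
      rw [Fin.sum_univ_eq_sum_range (fun i' => (Bl k).getD (i' % R) d j.val) (2*R)]
    rw [e1]
    have e2 : ∑ jv ∈ range (8*t), (∑ i' ∈ range (2*R), (Bl k).getD (i' % R) d jv)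
          * (Bl k).getD (i.val % R) d jv
        = 2 * ipr k ((Bl k).getD (i.val % R) d) := by
      rw [hkn]
      unfold ipr
      rw [Finset.mul_sum]
      apply Finset.sum_congr rfl
      intro jv hjv
      rw [hS jv (mem_range.mp hjv)]
      ring
    rw [e2]
    have hcast : (8:ℤ) ≤ ((8*t : ℕ) : ℤ) := by
      push_cast
      omega
    omega
  case refine_3 =>
    refine ⟨⟨0, by omega⟩, ?_⟩
    have e1 : ∑ i' : Fin (2*R), (Bl k).getD (i'.val % R) d 0 = 2 * aseq k := by
      rw [Fin.sum_univ_eq_sum_range (fun i' => (Bl k).getD (i' % R) d 0) (2*R),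
        hS 0 (by omega), sig_zero]
    rw [e1]
    have hpos : (0:ℤ) ≤ 2 * aseq k := by
      have := aseq_pos k
      omega
    have habs : |((2 * aseq k : ℤ) : ℝ)| = ((2 * aseq k : ℤ) : ℝ) := by
      rw [abs_of_nonneg]
      exact_mod_cast hpos
    rw [habs]
    have hdiv : (8*t) / 2 = k + 1 := by omega
    rw [hdiv]
    have hb := pow_bound k (by omega)
    have hbr : (2:ℝ)^(k+1) ≤ ((4 * aseq k : ℤ) : ℝ) := by
      exact_mod_cast hb
    push_cast at hbr ⊢
    linarith
  case refine_4 =>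
    refine ⟨fun i => if i.val < R then 1 else -1, fun i => by by_cases h : i.val < R <;> simp [h], ?_⟩
    intro j
    have e1 : ∑ i : Fin (2*R), (if i.val < R then (1:ℤ) else -1) * (Bl k).getD (i.val % R) d j.val
        = ∑ iv ∈ range (2*R), (if iv < R then (1:ℤ) else -1) * (Bl k).getD (iv % R) d j.val :=
      Fin.sum_univ_eq_sum_range
        (fun iv => (if iv < R then (1:ℤ) else -1) * (Bl k).getD (iv % R) d j.val) (2*R)
    rw [e1, two_mul, Finset.sum_range_add]
    have h1 : ∑ iv ∈ range R, (if iv < R then (1:ℤ) else -1) * (Bl k).getD (iv % R) d j.val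
        = ∑ iv ∈ range R, (Bl k).getD iv d j.val := by
      apply Finset.sum_congr rfl
      intro i hi
      have hi' := mem_range.mp hi
      rw [if_pos hi', Nat.mod_eq_of_lt hi', one_mul]
    have h2 : ∑ iv ∈ range R, (if R + iv < R then (1:ℤ) else -1) * (Bl k).getD ((R + iv) % R) d j.val
        = -∑ iv ∈ range R, (Bl k).getD iv d j.val := by
      rw [← Finset.sum_neg_distrib]
      apply Finset.sum_congr rfl
      intro i hi
      have hi' := mem_range.mp hi
      rw [if_neg (by omega), Nat.add_mod_left, Nat.mod_eq_of_lt hi']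
      ring
    rw [h1, h2]
    ring
  case refine_1 =>
    intro i j
    have hmem : (Bl k).getD (i.val % R) d ∈ Bl k := by
      rw [List.getD_eq_getElem _ _ (Nat.mod_lt _ hR)]
      exact List.getElem_mem _
    exact Bl_entries k _ hmem j.val

/-- **Exponential lower bound for ℓ₂ local search on `{±1}` vectors.**
There is a constant `c > 0` such that for every positive `n` divisible by `8` there is a
finite collection of `{±1}ⁿ` vectors on which the all-ones signing is a local optimum of
the ℓ₂-potential local search (`⟨S, aᵢ⟩ ≤ n` for every vector, where `S` is the signed
sum), yet `‖S‖_∞ ≥ c·2^{n/2}`, while some `±1` signing of the same collection has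
discrepancy `0`. -/
theorem stmt5 :
    ∃ c : ℝ, 0 < c ∧
      ∀ n : ℕ, 0 < n → 8 ∣ n →
        ∃ (T : ℕ) (a : Fin T → Fin n → ℤ),
          (∀ i j, a i j = 1 ∨ a i j = -1) ∧
          (∀ i : Fin T, (∑ j : Fin n, (∑ i' : Fin T, a i' j) * a i j) ≤ (n : ℤ)) ∧
          (∃ j : Fin n, c * 2 ^ (n / 2) ≤ |((∑ i' : Fin T, a i' j : ℤ) : ℝ)|) ∧
          (∃ ε : Fin T → ℤ, (∀ i, ε i = 1 ∨ ε i = -1) ∧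
            ∀ j : Fin n, ∑ i : Fin T, ε i * a i j = 0) := stmt5'
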